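/- Let J ≥ 1, let B₀ = 0 < B₁ < ⋯ < B_J be real numbers, and let b₀, …, b_J be complex numbers with b₀ ≠ 0 and b_J ≠ 0, and let Φ(ρ) = ∑_{j=0}^{J} b_j e^{ρ B_j}. Then for every δ > 0 there exists ε > 0 such that every ρ ∈ ℂ whose distance to the zero set of Φ is at least δ satisfies |Φ(ρ)| ≥ ε (away from its zeros, the exponential sum is uniformly bounded from zero). -/

import Mathlib

open Complex Finset Filter

lemma myaux1 (J : ℕ) (a E : ℕ → ℝ) (hE : ∀ j, j < J → E j < 0) :
    Tendsto (fun A : ℝ => ∑ j ∈ Finset.range J, a j * Real.exp (A * E j)) atTop (nhds 0) := by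
  have : Tendsto (fun A : ℝ => ∑ j ∈ Finset.range J, a j * Real.exp (A * E j)) atTop
      (nhds (∑ j ∈ Finset.range J, 0)) := by
    apply tendsto_finset_sum
    intro j hj
    have h1 : Tendsto (fun A : ℝ => A * E j) atTop atBot :=
      Tendsto.atTop_mul_const_of_neg (hE j (Finset.mem_range.mp hj)) tendsto_id
    have h2 : Tendsto (fun A : ℝ => Real.exp (A * E j)) atTop (nhds 0) :=
      Real.tendsto_exp_atBot.comp h1
    simpa using h2.const_mul (a j)
  simpa using this

lemma myaux2 (J : ℕ) (a : ℕ → ℂ) (E : ℕ → ℝ) (hE0 : E 0 = 0)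
    (hE : ∀ j, j < J → E (j + 1) < 0) (ha : a 0 ≠ 0) :
    ∃ A : ℝ, ∀ ρ : ℂ, A ≤ ρ.re →
      ‖a 0‖ / 2 ≤
        ‖∑ j ∈ Finset.range (J + 1), a j * Complex.exp (ρ * (E j : ℂ))‖ := by
  have h0 : (0:ℝ) < ‖a 0‖ / 2 := by
    have := norm_pos_iff.mpr ha; linarith
  have := (myaux1 J (fun j => ‖a (j+1)‖) (fun j => E (j+1)) hE).eventually_lt_const h0
  obtain ⟨A, hA⟩ := this.exists
  refine ⟨A, fun ρ hρ => ?_⟩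
  have hsplit : (∑ j ∈ Finset.range (J + 1), a j * Complex.exp (ρ * (E j : ℂ)))
      = (∑ j ∈ Finset.range J, a (j+1) * Complex.exp (ρ * (E (j+1) : ℂ))) + a 0 := by
    rw [Finset.sum_range_succ']
    simp [hE0]
  set S := ∑ j ∈ Finset.range (J + 1), a j * Complex.exp (ρ * (E j : ℂ)) with hS
  set T := ∑ j ∈ Finset.range J, a (j+1) * Complex.exp (ρ * (E (j+1) : ℂ)) with hT
  have hTle : ‖T‖ ≤ ∑ j ∈ Finset.range J, ‖a (j+1)‖ * Real.exp (A * E (j+1)) := by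
    refine (norm_sum_le _ _).trans (Finset.sum_le_sum fun j hj => ?_)
    rw [norm_mul, Complex.norm_exp]
    have hre : (ρ * (E (j+1) : ℂ)).re = ρ.re * E (j+1) := by simp
    rw [hre]
    refine mul_le_mul_of_nonneg_left (Real.exp_le_exp.mpr ?_) (norm_nonneg _)
    exact mul_le_mul_of_nonpos_right hρ (le_of_lt (hE j (Finset.mem_range.mp hj)))
  have habs : ‖a 0‖ ≤ ‖S‖ + ‖T‖ := by
    have h2 : a 0 = S - T := by rw [hsplit]; ring
    calc ‖a 0‖ = ‖S - T‖ := by rw [h2]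
    _ ≤ ‖S‖ + ‖T‖ := by simpa using norm_sub_le S T
  linarith [hTle.trans_lt hA]

theorem exponential_sum_bounded_from_zero_away_from_roots
    (J : ℕ) (hJ : 1 ≤ J) (B : ℕ → ℝ) (b : ℕ → ℂ)
    (hB0 : B 0 = 0) (hBmono : ∀ i, i < J → B i < B (i + 1))
    (hb0 : b 0 ≠ 0) (hbJ : b J ≠ 0)
    (Φ : ℂ → ℂ)
    (hΦ : ∀ ρ : ℂ, Φ ρ = ∑ j ∈ Finset.range (J + 1), b j * Complex.exp (ρ * (B j : ℂ))) :
    ∀ δ : ℝ, 0 < δ → ∃ ε : ℝ, 0 < ε ∧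
      ∀ ρ : ℂ, (∀ z : ℂ, Φ z = 0 → δ ≤ dist ρ z) → ε ≤ ‖Φ ρ‖ := by
  have hΦeq : Φ = fun ρ => ∑ j ∈ Finset.range (J + 1), b j * Complex.exp (ρ * (B j : ℂ)) :=
    funext hΦ
  subst hΦeq
  set Φ : ℂ → ℂ := fun ρ => ∑ j ∈ Finset.range (J + 1), b j * Complex.exp (ρ * (B j : ℂ)) with hΦdef
  -- monotonicity facts
  have hmono : ∀ i j, i ≤ j → j ≤ J → B i ≤ B j := by
    intro i j hij hjJ
    induction j with
    | zero => exact Nat.le_zero.mp hij ▸ le_refl _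
    | succ k ih =>
      rcases Nat.eq_or_lt_of_le hij with h | h
      · rw [h]
      · exact le_trans (ih (by omega) (by omega)) (le_of_lt (hBmono k (by omega)))
  have hstrict : ∀ i j, i < j → j ≤ J → B i < B j := by
    intro i j hij hjJ
    have h1 : B i ≤ B (j - 1) := hmono i (j-1) (by omega) (by omega)
    have h2 : B (j - 1) < B j := by
      have := hBmono (j-1) (by omega)
      have hj : j - 1 + 1 = j := by omega
      rwa [hj] at this
    linarith
  have hBpos : ∀ j, 1 ≤ j → j ≤ J → 0 < B j := fun j h1 h2 => hB0 ▸ hstrict 0 j h1 h2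
  have hBJpos : 0 < B J := hBpos J hJ le_rfl
  have hBnonneg : ∀ j, j ≤ J → 0 ≤ B j := by
    intro j hj; rcases Nat.eq_zero_or_pos j with h | h
    · rw [h, hB0]
    · exact le_of_lt (hBpos j h hj)
  have hltJ : ∀ j, j < J → B j < B J := fun j hj => hstrict j J hj le_rfl
  -- differentiability of such sums
  have hdiffsum : ∀ (a : ℕ → ℂ), Differentiable ℂ
      (fun ρ : ℂ => ∑ j ∈ Finset.range (J + 1), a j * Complex.exp (ρ * (B j : ℂ))) := by
    intro a
    apply Differentiable.fun_sum
    intro j _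
    exact (differentiable_const (a j)).mul
      (Complex.differentiable_exp.comp (differentiable_id.mul_const ((B j : ℂ))))
  have hdiff : Differentiable ℂ Φ := hdiffsum b
  -- left bound
  obtain ⟨Al, hAl⟩ := myaux2 J b (fun j => -B j) (by simp [hB0])
    (fun j hj => neg_neg_iff_pos.mpr (hBpos (j+1) (by omega) (by omega))) hb0
  have hleft : ∀ σ : ℂ, σ.re ≤ -Al → ‖b 0‖ / 2 ≤ ‖Φ σ‖ := by
    intro σ hσ
    have h1 := hAl (-σ) (by simp; linarith)
    have h2 : (∑ j ∈ Finset.range (J + 1), b j * Complex.exp ((-σ) * ((-B j : ℝ) : ℂ))) = Φ σ := by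
      apply Finset.sum_congr rfl
      intro j _
      congr 1
      push_cast
      ring
    rwa [h2] at h1
  -- right bound
  obtain ⟨Ar0, hAr0⟩ := myaux2 J (fun j => b (J - j)) (fun j => B (J - j) - B J)
    (by simp) (fun j hj => by
      have : B (J - (j+1)) < B J := hltJ (J - (j+1)) (by omega)
      simpa using sub_neg.mpr this)
    (by simpa using hbJ)
  have hright : ∀ σ : ℂ, max Ar0 0 ≤ σ.re → ‖b J‖ / 2 ≤ ‖Φ σ‖ := by
    intro σ hσ
    have h1 := hAr0 σ (le_trans (le_max_left _ _) hσ)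
    have h2 : (∑ j ∈ Finset.range (J + 1), b (J - j) * Complex.exp (σ * ((B (J - j) - B J : ℝ) : ℂ)))
        = Φ σ * Complex.exp (-(σ * (B J : ℂ))) := by
      have hrefl := Finset.sum_range_reflect
        (fun j => b j * Complex.exp (σ * ((B j - B J : ℝ) : ℂ))) (J+1)
      have hLHS : (∑ j ∈ Finset.range (J + 1), b (J - j) * Complex.exp (σ * ((B (J - j) - B J : ℝ) : ℂ)))
          = ∑ j ∈ Finset.range (J + 1), b j * Complex.exp (σ * ((B j - B J : ℝ) : ℂ)) := by
        rw [← hrefl]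
        apply Finset.sum_congr rfl
        intro j hj
        have h3 : J + 1 - 1 - j = J - j := by omega
        rw [h3]
      rw [hLHS, hΦdef]
      rw [Finset.sum_mul]
      apply Finset.sum_congr rfl
      intro j hj
      rw [mul_assoc, ← Complex.exp_add]
      congr 1
      push_cast
      ring
    rw [h2] at h1
    rw [norm_mul, Complex.norm_exp] at h1
    have h4 : (-(σ * (B J : ℂ))).re = -(σ.re * B J) := by simp
    rw [h4] at h1
    have h5 : Real.exp (-(σ.re * B J)) ≤ 1 := by
      rw [Real.exp_le_one_iff]
      have h6 : 0 ≤ σ.re := le_trans (le_max_right _ _) hσ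
      simp
      positivity
    have h7 := norm_nonneg (Φ σ)
    calc ‖b J‖ / 2 ≤ ‖Φ σ‖ * Real.exp (-(σ.re * B J)) := by
          simpa using h1
    _ ≤ ‖Φ σ‖ * 1 := by
          exact mul_le_mul_of_nonneg_left h5 h7
    _ = ‖Φ σ‖ := mul_one _
  -- main argument by contradiction
  intro δ hδ
  by_contra hcon
  push_neg at hcon
  have hE0pos : 0 < min (‖b 0‖ / 2) (‖b J‖ / 2) := by
    have := norm_pos_iff.mpr hb0; have := norm_pos_iff.mpr hbJ
    have h1 : 0 < ‖b 0‖ / 2 := by linarith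
    have h2 : 0 < ‖b J‖ / 2 := by linarith
    exact lt_min h1 h2
  set E0 := min (‖b 0‖ / 2) (‖b J‖ / 2) with hE0def
  have hchoice : ∀ n : ℕ, ∃ ρ : ℂ, (∀ z : ℂ, Φ z = 0 → δ ≤ dist ρ z) ∧
      ‖Φ ρ‖ < min (1 / ((n:ℝ) + 1)) E0 := by
    intro n
    apply hcon
    have : (0:ℝ) < 1 / ((n:ℝ) + 1) := by positivity
    exact lt_min this hE0pos
  choose ρs hρs1 hρs2 using hchoice
  -- real parts are bounded
  have hrebd : ∀ n, (ρs n).re ∈ Set.Icc (-Al) (max Ar0 0) := by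
    intro n
    constructor
    · by_contra h
      push_neg at h
      have := hleft (ρs n) (le_of_lt h)
      have h2 := hρs2 n
      have h3 : E0 ≤ ‖b 0‖ / 2 := min_le_left _ _
      have h4 : min (1 / ((n:ℝ) + 1)) E0 ≤ E0 := min_le_right _ _
      linarith
    · by_contra h
      push_neg at h
      have := hright (ρs n) (le_of_lt h)
      have h2 := hρs2 n
      have h3 : E0 ≤ ‖b J‖ / 2 := min_le_right _ _
      have h4 : min (1 / ((n:ℝ) + 1)) E0 ≤ E0 := min_le_right _ _
      linarith
  -- the torus sequence
  set u : ℕ → ℕ → ℂ := fun n j => Complex.exp ((((ρs n).im * B j : ℝ) : ℂ) * I) with hudef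
  set v : ℕ → ℝ × (Fin (J + 1) → ℂ) := fun n => ((ρs n).re, fun j => u n (j : ℕ)) with hvdef
  have hK : IsCompact ((Set.Icc (-Al) (max Ar0 0)) ×ˢ
      (Set.univ.pi fun _ : Fin (J + 1) => Metric.sphere (0:ℂ) 1)) :=
    (isCompact_Icc).prod (isCompact_univ_pi fun _ => isCompact_sphere 0 1)
  have hvK : ∀ n, v n ∈ ((Set.Icc (-Al) (max Ar0 0)) ×ˢ
      (Set.univ.pi fun _ : Fin (J + 1) => Metric.sphere (0:ℂ) 1)) := by
    intro n
    refine ⟨hrebd n, ?_⟩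
    intro j _
    rw [mem_sphere_zero_iff_norm]
    exact Complex.norm_exp_ofReal_mul_I _
  obtain ⟨L, hLK, φ, hφmono, hφconv⟩ := hK.tendsto_subseq hvK
  have hx : Tendsto (fun n => (ρs (φ n)).re) atTop (nhds L.1) :=
    (continuous_fst.tendsto L).comp hφconv
  have hcF : ∀ j : Fin (J + 1), Tendsto (fun n => u (φ n) (j : ℕ)) atTop (nhds (L.2 j)) :=
    fun j => ((continuous_apply j).tendsto L.2).comp ((continuous_snd.tendsto L).comp hφconv)
  set x₀ := L.1 with hx₀def
  set cc : ℕ → ℂ := fun j => if h : j < J + 1 then L.2 ⟨j, h⟩ else 1 with hccdef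
  have hcc : ∀ j, j ≤ J → Tendsto (fun n => u (φ n) j) atTop (nhds (cc j)) := by
    intro j hj
    have h1 := hcF ⟨j, by omega⟩
    simpa [hccdef, dif_pos (by omega : j < J + 1), hj] using h1
  have hccnorm : ∀ j, j ≤ J → ‖cc j‖ = 1 := by
    intro j hj
    have := hLK.2 ⟨j, by omega⟩ (Set.mem_univ _)
    rw [mem_sphere_zero_iff_norm] at this
    simpa [hccdef, dif_pos (by omega : j < J + 1), hj] using this
  have hccne : ∀ j, j ≤ J → cc j ≠ 0 := by
    intro j hj h
    have := hccnorm j hj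
    rw [h] at this
    simp at this
  -- shift expansion
  have hexp : ∀ (z : ℂ) (y : ℝ), Φ (z + (y : ℂ) * I)
      = ∑ j ∈ Finset.range (J + 1), b j * Complex.exp (z * (B j : ℂ)) *
          Complex.exp (((y * B j : ℝ) : ℂ) * I) := by
    intro z y
    rw [hΦdef]
    apply Finset.sum_congr rfl
    intro j _
    rw [mul_assoc, ← Complex.exp_add]
    congr 2
    push_cast
    ring
  -- limit function Ψ
  set Ψ : ℂ → ℂ := fun z => ∑ j ∈ Finset.range (J + 1), (b j * cc j) * Complex.exp (z * (B j : ℂ))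
    with hΨdef
  have hΦρ : ∀ n, Φ (ρs n) = ∑ j ∈ Finset.range (J + 1),
      b j * Complex.exp (((ρs n).re : ℂ) * (B j : ℂ)) * u n j := by
    intro n
    have h1 : ρs n = ((ρs n).re : ℂ) + ((ρs n).im : ℝ) * I := (Complex.re_add_im (ρs n)).symm
    conv_lhs => rw [h1, hexp]
  have hΦ0 : Tendsto (fun n => Φ (ρs (φ n))) atTop (nhds 0) := by
    apply squeeze_zero_norm (f := fun n => Φ (ρs (φ n))) (a := fun n => 1 / ((n:ℝ) + 1))
    · intro n
      have h1 := hρs2 (φ n)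
      have h2 : (1:ℝ) / ((φ n : ℝ) + 1) ≤ 1 / ((n:ℝ) + 1) := by
        apply one_div_le_one_div_of_le (by positivity)
        have h3 : n ≤ φ n := hφmono.le_apply
        have h4 : ((n:ℝ)) ≤ (φ n : ℝ) := by exact_mod_cast h3
        linarith
      calc ‖Φ (ρs (φ n))‖ ≤ 1 / ((φ n : ℝ) + 1) :=
            le_of_lt (lt_of_lt_of_le h1 (min_le_left _ _))
      _ ≤ 1 / ((n:ℝ) + 1) := h2
    · exact tendsto_one_div_add_atTop_nhds_zero_nat
  have hΦΨ : Tendsto (fun n => Φ (ρs (φ n))) atTop (nhds (Ψ ((x₀ : ℂ)))) := by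
    have hΨx : Ψ ((x₀ : ℂ)) = ∑ j ∈ Finset.range (J + 1),
        b j * Complex.exp ((x₀ : ℂ) * (B j : ℂ)) * cc j := by
      rw [hΨdef]
      exact Finset.sum_congr rfl fun j _ => by ring
    rw [hΨx]
    have : Tendsto (fun n => ∑ j ∈ Finset.range (J + 1),
        b j * Complex.exp ((((ρs (φ n)).re : ℝ) : ℂ) * (B j : ℂ)) * u (φ n) j) atTop
        (nhds (∑ j ∈ Finset.range (J + 1),
          b j * Complex.exp ((x₀ : ℂ) * (B j : ℂ)) * cc j)) := by
      apply tendsto_finset_sum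
      intro j hj
      have hjJ : j ≤ J := by have := Finset.mem_range.mp hj; omega
      have h1 : Tendsto (fun n => (((ρs (φ n)).re : ℝ) : ℂ)) atTop (nhds ((x₀ : ℝ) : ℂ)) :=
        (Complex.continuous_ofReal.tendsto x₀).comp hx
      have h2 : Tendsto (fun n => Complex.exp ((((ρs (φ n)).re : ℝ) : ℂ) * (B j : ℂ))) atTop
          (nhds (Complex.exp ((x₀ : ℂ) * (B j : ℂ)))) :=
        (Complex.continuous_exp.tendsto _).comp (h1.mul_const _)
      exact ((h2.const_mul (b j)).mul (hcc j hjJ))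
    have heq : (fun n => Φ (ρs (φ n))) = fun n => ∑ j ∈ Finset.range (J + 1),
        b j * Complex.exp ((((ρs (φ n)).re : ℝ) : ℂ) * (B j : ℂ)) * u (φ n) j := by
      funext n
      exact hΦρ (φ n)
    rw [heq]
    exact this
  have hΨx₀ : Ψ ((x₀ : ℂ)) = 0 := tendsto_nhds_unique hΦΨ hΦ0
  -- Ψ is not locally zero
  have hΨdiff : Differentiable ℂ Ψ := hdiffsum (fun j => b j * cc j)
  obtain ⟨Aψ, hAψ⟩ := myaux2 J (fun j => b j * cc j) (fun j => -B j) (by simp [hB0])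
    (fun j hj => neg_neg_iff_pos.mpr (hBpos (j+1) (by omega) (by omega)))
    (mul_ne_zero hb0 (hccne 0 (by omega)))
  have hΨleft : ∀ σ : ℂ, σ.re ≤ -Aψ → ‖b 0 * cc 0‖ / 2 ≤ ‖Ψ σ‖ := by
    intro σ hσ
    have h1 := hAψ (-σ) (by simp; linarith)
    have h2 : (∑ j ∈ Finset.range (J + 1), (b j * cc j) * Complex.exp ((-σ) * ((-B j : ℝ) : ℂ)))
        = Ψ σ := by
      apply Finset.sum_congr rfl
      intro j _
      congr 1
      push_cast
      ring
    rwa [h2] at h1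
  have hΨne : ∀ᶠ z in nhdsWithin ((x₀:ℂ)) {(x₀:ℂ)}ᶜ, Ψ z ≠ 0 := by
    rcases (hΨdiff.analyticAt ((x₀:ℂ))).eventually_eq_zero_or_eventually_ne_zero with h | h
    · exfalso
      have hall : Set.EqOn Ψ 0 Set.univ := by
        apply AnalyticOnNhd.eqOn_zero_of_preconnected_of_eventuallyEq_zero
          (fun z _ => hΨdiff.analyticAt z) isPreconnected_univ (Set.mem_univ ((x₀:ℂ))) h
      set σ : ℂ := ((-|Aψ| - 1 : ℝ) : ℂ) with hσdef
      have hσre : σ.re ≤ -Aψ := by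
        rw [hσdef]
        simp
        have := abs_nonneg Aψ
        have := le_abs_self Aψ
        linarith
      have h1 := hΨleft σ hσre
      have h2 : Ψ σ = 0 := hall (Set.mem_univ σ)
      rw [h2] at h1
      simp at h1
      have h4 := hccnorm 0 (by omega)
      rw [h4, mul_one] at h1
      have h5 := norm_pos_iff.mpr hb0
      linarith
    · exact h
  -- choose a zero-free punctured radius
  obtain ⟨r1, hr1pos, hr1⟩ : ∃ r1 > 0, ∀ z : ℂ, dist z ((x₀:ℝ):ℂ) < r1 → z ≠ ((x₀:ℝ):ℂ) → Ψ z ≠ 0 := by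
    have h := eventually_nhdsWithin_iff.mp hΨne
    rw [Metric.eventually_nhds_iff] at h
    obtain ⟨ε, hε, hball⟩ := h
    exact ⟨ε, hε, fun z h1 h2 => hball h1 (by simpa using h2)⟩
  set r := min (r1 / 2) (δ / 2) with hrdef
  have hrpos : 0 < r := lt_min (by linarith) (by linarith)
  have hr2δ : 2 * r ≤ δ := by
    have := min_le_right (r1 / 2) (δ / 2)
    rw [← hrdef] at this
    linarith
  have hrr1 : r < r1 := lt_of_le_of_lt (min_le_left _ _) (by linarith)
  have hΨsph : ∀ z ∈ Metric.sphere ((x₀:ℂ)) r, Ψ z ≠ 0 := by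
    intro z hz
    rw [Metric.mem_sphere] at hz
    apply hr1 z (by rw [hz]; exact hrr1)
    intro h
    rw [h] at hz
    simp at hz
    linarith
  -- minimum of |Ψ| on the sphere
  obtain ⟨zm, hzm_mem, hzm_min⟩ := (isCompact_sphere ((x₀:ℂ)) r).exists_isMinOn
    (NormedSpace.sphere_nonempty.mpr hrpos.le)
    ((continuous_norm.comp hΨdiff.continuous).continuousOn)
  set m := ‖Ψ zm‖ with hmdef
  have hmpos : 0 < m := norm_pos_iff.mpr (hΨsph zm hzm_mem)
  have hmle : ∀ z ∈ Metric.sphere ((x₀:ℂ)) r, m ≤ ‖Ψ z‖ :=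
    fun z hz => isMinOn_iff.mp hzm_min z hz
  -- exponential bound on the closed ball
  set R := |x₀| + r with hRdef
  have hRnonneg : 0 ≤ R := add_nonneg (abs_nonneg _) hrpos.le
  have hexpbound : ∀ z : ℂ, z ∈ Metric.closedBall ((x₀:ℂ)) r → ∀ j, j ≤ J →
      ‖Complex.exp (z * (B j : ℂ))‖ ≤ Real.exp (R * B J) := by
    intro z hz j hj
    rw [Complex.norm_exp]
    apply Real.exp_le_exp.mpr
    have h1 : (z * (B j : ℂ)).re = z.re * B j := by simp
    rw [h1]
    rw [Metric.mem_closedBall, Complex.dist_eq] at hz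
    have h2 : z.re - x₀ ≤ ‖z - ((x₀:ℝ):ℂ)‖ := by
      have h3 := Complex.re_le_norm (z - ((x₀:ℝ):ℂ))
      simpa using h3
    have h3 : z.re ≤ R := by
      rw [hRdef]
      have := le_abs_self x₀
      linarith
    calc z.re * B j ≤ R * B j := mul_le_mul_of_nonneg_right h3 (hBnonneg j hj)
    _ ≤ R * B J := mul_le_mul_of_nonneg_left (hmono j J hj le_rfl) hRnonneg
  -- distance between shifted Φ and Ψ
  have hdiffbound : ∀ n, ∀ z ∈ Metric.closedBall ((x₀:ℂ)) r,
      ‖Φ (z + (((ρs n).im : ℝ) : ℂ) * I) - Ψ z‖ ≤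
        (∑ j ∈ Finset.range (J+1), ‖b j‖ * ‖u n j - cc j‖) *
          Real.exp (R * B J) := by
    intro n z hz
    rw [hexp z ((ρs n).im), hΨdef]
    simp only [hudef]
    rw [← Finset.sum_sub_distrib]
    refine (norm_sum_le _ _).trans ?_
    rw [Finset.sum_mul]
    apply Finset.sum_le_sum
    intro j hj
    have hjJ : j ≤ J := by have := Finset.mem_range.mp hj; omega
    have h1 : b j * Complex.exp (z * ((B j : ℝ) : ℂ)) * Complex.exp ((((ρs n).im * B j : ℝ) : ℂ) * I)
        - b j * cc j * Complex.exp (z * ((B j : ℝ) : ℂ))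
        = (b j * (Complex.exp ((((ρs n).im * B j : ℝ) : ℂ) * I) - cc j))
            * Complex.exp (z * ((B j : ℝ) : ℂ)) := by
      ring
    rw [h1, norm_mul, norm_mul]
    exact mul_le_mul_of_nonneg_left (hexpbound z hz j hjJ)
      (mul_nonneg (norm_nonneg _) (norm_nonneg _))
  -- the error tends to zero
  have hserr : Tendsto (fun n => (∑ j ∈ Finset.range (J+1),
      ‖b j‖ * ‖u (φ n) j - cc j‖) * Real.exp (R * B J)) atTop (nhds 0) := by
    have h1 : Tendsto (fun n => ∑ j ∈ Finset.range (J+1),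
        ‖b j‖ * ‖u (φ n) j - cc j‖) atTop
        (nhds (∑ j ∈ Finset.range (J+1), (0:ℝ))) := by
      apply tendsto_finset_sum
      intro j hj
      have hjJ : j ≤ J := by have := Finset.mem_range.mp hj; omega
      have h2 : Tendsto (fun n => u (φ n) j - cc j) atTop (nhds 0) := by
        simpa using (hcc j hjJ).sub_const (cc j)
      have h3 : Tendsto (fun n => ‖u (φ n) j - cc j‖) atTop (nhds 0) := by
        simpa using h2.norm
      simpa using h3.const_mul (‖b j‖)
    have h1' : Tendsto (fun n => ∑ j ∈ Finset.range (J+1),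
        ‖b j‖ * ‖u (φ n) j - cc j‖) atTop (nhds 0) := by
      simpa using h1
    simpa using h1'.mul_const (Real.exp (R * B J))
  -- choose a good index
  obtain ⟨N1, hN1⟩ := Metric.tendsto_atTop.mp hx r hrpos
  obtain ⟨N2, hN2⟩ := eventually_atTop.mp (hserr.eventually_lt_const (half_pos hmpos))
  have hΦ0abs : Tendsto (fun n => ‖Φ (ρs (φ n))‖) atTop (nhds 0) := by
    simpa using hΦ0.norm
  obtain ⟨N3, hN3⟩ := eventually_atTop.mp (hΦ0abs.eventually_lt_const (half_pos hmpos))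
  set N := max (max N1 N2) N3 with hNdef
  have hN1' : dist (ρs (φ N)).re x₀ < r := hN1 N (by omega)
  have hN2' : (∑ j ∈ Finset.range (J+1),
      ‖b j‖ * ‖u (φ N) j - cc j‖) * Real.exp (R * B J) < m / 2 :=
    hN2 N (by omega)
  have hN3' : ‖Φ (ρs (φ N))‖ < m / 2 := hN3 N (by omega)
  set y : ℝ := (ρs (φ N)).im with hydef
  set xN : ℝ := (ρs (φ N)).re with hxNdef
  set g : ℂ → ℂ := fun z => Φ (z + (y : ℂ) * I) with hgdef
  -- g has no zeros on the closed ball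
  have hgz : ∀ z ∈ Metric.closedBall ((x₀:ℂ)) r, g z ≠ 0 := by
    intro z hz hzz
    have h0 := hρs1 (φ N) (z + (y : ℂ) * I) hzz
    have h1 : ρs (φ N) = ((xN : ℝ) : ℂ) + ((y : ℝ) : ℂ) * I := (Complex.re_add_im _).symm
    rw [h1] at h0
    have h2 : dist (((xN : ℝ) : ℂ) + ((y : ℝ) : ℂ) * I) (z + (y : ℂ) * I)
        = ‖((xN : ℝ) : ℂ) - z‖ := by
      rw [Complex.dist_eq]
      congr 1
      ring
    rw [h2] at h0
    rw [Metric.mem_closedBall, Complex.dist_eq] at hz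
    have h3 : ‖((xN : ℝ) : ℂ) - z‖
        ≤ ‖((xN : ℝ) : ℂ) - ((x₀ : ℝ) : ℂ)‖ + ‖z - ((x₀ : ℝ) : ℂ)‖ := by
      have h4 := dist_triangle (((xN : ℝ) : ℂ)) (((x₀ : ℝ) : ℂ)) z
      rwa [Complex.dist_eq, Complex.dist_eq, Complex.dist_eq, norm_sub_rev (((x₀ : ℝ) : ℂ)) z] at h4
    have h5 : ‖((xN : ℝ) : ℂ) - ((x₀ : ℝ) : ℂ)‖ < r := by
      rw [← Complex.ofReal_sub, Complex.norm_real, Real.norm_eq_abs]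
      rw [Real.dist_eq] at hN1'
      exact hN1'
    linarith
  -- lower bound on the sphere
  have hgsph : ∀ z ∈ Metric.sphere ((x₀:ℂ)) r, m / 2 ≤ ‖g z‖ := by
    intro z hz
    have hzball : z ∈ Metric.closedBall ((x₀:ℂ)) r := Metric.sphere_subset_closedBall hz
    have h1 := hdiffbound (φ N) z hzball
    have h3 := hmle z hz
    have h4 : ‖Ψ z‖ ≤ ‖g z‖ + ‖g z - Ψ z‖ := by
      have h5 : Ψ z = g z - (g z - Ψ z) := by ring
      rw [h5]
      simpa using norm_sub_le (g z) (g z - Ψ z)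
    have h6 : ‖g z - Ψ z‖ < m / 2 := lt_of_le_of_lt h1 hN2'
    linarith
  -- maximum modulus principle for 1/g
  have hgdiffAll : Differentiable ℂ g := hdiff.comp (differentiable_id.add_const ((y:ℂ) * I))
  have hinvdiff : DifferentiableOn ℂ (fun z => (g z)⁻¹) (Metric.closedBall ((x₀:ℂ)) r) :=
    DifferentiableOn.inv hgdiffAll.differentiableOn hgz
  have hdcc : DiffContOnCl ℂ (fun z => (g z)⁻¹) (Metric.ball ((x₀:ℂ)) r) := by
    apply DifferentiableOn.diffContOnCl
    rwa [closure_ball _ (ne_of_gt hrpos)]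
  have hfrontier : ∀ z ∈ frontier (Metric.ball ((x₀:ℂ)) r), ‖(g z)⁻¹‖ ≤ 2 / m := by
    intro z hz
    rw [frontier_ball _ (ne_of_gt hrpos)] at hz
    have h1 := hgsph z hz
    rw [norm_inv]
    have h2 : (‖g z‖)⁻¹ ≤ (m / 2)⁻¹ := inv_anti₀ (half_pos hmpos) h1
    calc (‖g z‖)⁻¹ ≤ (m / 2)⁻¹ := h2
    _ = 2 / m := by rw [inv_div]
  have hxNclos : ((xN : ℝ) : ℂ) ∈ closure (Metric.ball ((x₀:ℂ)) r) := by
    rw [closure_ball _ (ne_of_gt hrpos), Metric.mem_closedBall, Complex.dist_eq,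
      ← Complex.ofReal_sub, Complex.norm_real, Real.norm_eq_abs]
    rw [Real.dist_eq] at hN1'
    exact le_of_lt hN1'
  have hmax := Complex.norm_le_of_forall_mem_frontier_norm_le Metric.isBounded_ball hdcc
    hfrontier hxNclos
  -- conclusion
  have hgxN : g ((xN : ℝ) : ℂ) = Φ (ρs (φ N)) := by
    rw [hgdef]
    simp only []
    congr 1
    exact Complex.re_add_im _
  have hg0 : g ((xN : ℝ) : ℂ) ≠ 0 := by
    apply hgz
    rw [Metric.mem_closedBall, Complex.dist_eq, ← Complex.ofReal_sub, Complex.norm_real, Real.norm_eq_abs]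
    rw [Real.dist_eq] at hN1'
    exact le_of_lt hN1'
  have hpos : 0 < ‖g ((xN : ℝ) : ℂ)‖ := norm_pos_iff.mpr hg0
  rw [norm_inv] at hmax
  have h7 : m / 2 ≤ ‖g ((xN : ℝ) : ℂ)‖ := by
    have h8 : (‖g ((xN : ℝ) : ℂ)‖)⁻¹ * ‖g ((xN : ℝ) : ℂ)‖
        ≤ (2 / m) * ‖g ((xN : ℝ) : ℂ)‖ :=
      mul_le_mul_of_nonneg_right hmax hpos.le
    rw [inv_mul_cancel₀ hpos.ne'] at h8
    rw [div_mul_eq_mul_div, le_div_iff₀ hmpos] at h8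
    linarith
  rw [hgxN] at h7
  linarith
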